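/- Let f : ℝ^d → ℝ be continuous, M compact and connected with f constant equal to f_M on M, A_M a connected component of {x : f(x) ≥ λ_M} containing B(M, r_M) with λ_M < f_M, and suppose f(x) < f_M for x ∈ A_M \ M. Define g(t) := sup_{x ∈ {f ≥ f_M - t} ∩ A_M} d(x, M) for t ∈ [0, (f_M - λ_M)/2]. Then g(0) = 0 and g is nondecreasing, and for any continuous strictly increasing l with l(g(t)) ≤ t for all t, one has f_M - f(x) ≥ l(d(x,M)) for all x ∈ B(M, r_M). -/

import Mathlib

theorem stmt_14 (d : ℕ) (f : EuclideanSpace ℝ (Fin d) → ℝ) (hf : Continuous f)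
    (M : Set (EuclideanSpace ℝ (Fin d))) (hMne : M.Nonempty)
    (hMc : IsCompact M) (hMconn : IsConnected M)
    (fM lamM rM : ℝ) (hrM : 0 < rM) (hlam : lamM < fM)
    (hconst : ∀ x ∈ M, f x = fM)
    (AM : Set (EuclideanSpace ℝ (Fin d))) (hAMc : IsCompact AM)
    (hAMcc : ∃ x ∈ {y | lamM ≤ f y}, AM = connectedComponentIn {y | lamM ≤ f y} x)
    (hAMenv : {x | Metric.infDist x M ≤ rM} ⊆ AM)
    (hmax : ∀ x ∈ AM \ M, f x < fM)
    (g : ℝ → ℝ)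
    (hg : ∀ t, g t = sSup ((fun x => Metric.infDist x M) '' ({x | fM - t ≤ f x} ∩ AM))) :
    g 0 = 0 ∧ MonotoneOn g (Set.Icc 0 ((fM - lamM) / 2)) ∧
      ∀ l : ℝ → ℝ, Continuous l → StrictMono l → (∀ t, 0 ≤ t → l (g t) ≤ t) →
        ∀ x, Metric.infDist x M ≤ rM → l (Metric.infDist x M) ≤ fM - f x := by
  have hMA : M ⊆ AM := fun x hx => hAMenv (by
    simp only [Set.mem_setOf_eq, Metric.infDist_zero_of_mem hx]; exact hrM.le)
  have hbdd : BddAbove ((fun x => Metric.infDist x M) '' AM) :=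
    (hAMc.image (Metric.continuous_infDist_pt M)).bddAbove
  have hbdd' : ∀ t, BddAbove ((fun x => Metric.infDist x M) '' ({x | fM - t ≤ f x} ∩ AM)) :=
    fun t => hbdd.mono (Set.image_mono Set.inter_subset_right)
  have hne : ∀ t, 0 ≤ t →
      ((fun x => Metric.infDist x M) '' ({x | fM - t ≤ f x} ∩ AM)).Nonempty := by
    intro t ht
    obtain ⟨m, hm⟩ := hMne
    exact ⟨_, ⟨m, ⟨by simp [Set.mem_setOf_eq, hconst m hm]; linarith, hMA hm⟩, rfl⟩⟩
  have hmem : ∀ x ∈ AM, Metric.infDist x M ≤ g (fM - f x) := by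
    intro x hx
    rw [hg]
    exact le_csSup (hbdd' _) ⟨x, ⟨by simp [Set.mem_setOf_eq], hx⟩, rfl⟩
  refine ⟨?_, ?_, ?_⟩
  · rw [hg]
    have hset : {x | fM - 0 ≤ f x} ∩ AM = M := by
      ext x
      constructor
      · rintro ⟨hx1, hx2⟩
        by_contra hxM
        have := hmax x ⟨hx2, hxM⟩
        simp only [Set.mem_setOf_eq, sub_zero] at hx1
        linarith
      · intro hx
        exact ⟨by simp [Set.mem_setOf_eq, hconst x hx], hMA hx⟩
    rw [hset]
    have : (fun x => Metric.infDist x M) '' M = {0} := by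
      apply Set.Subset.antisymm
      · rintro _ ⟨x, hx, rfl⟩
        simp [Metric.infDist_zero_of_mem hx]
      · rintro _ rfl
        obtain ⟨m, hm⟩ := hMne
        exact ⟨m, hm, Metric.infDist_zero_of_mem hm⟩
    rw [this, csSup_singleton]
  · intro t1 ht1 t2 ht2 h12
    rw [hg, hg]
    refine csSup_le_csSup (hbdd' _) (hne t1 ht1.1) (Set.image_mono ?_)
    intro x hx
    have h1 : fM - t1 ≤ f x := hx.1
    exact ⟨by simp only [Set.mem_setOf_eq]; linarith, hx.2⟩
  · intro l hl hlm hlg x hx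
    have hxA : x ∈ AM := hAMenv hx
    have hfx : f x ≤ fM := by
      by_cases hxM : x ∈ M
      · exact (hconst x hxM).le
      · exact (hmax x ⟨hxA, hxM⟩).le
    calc l (Metric.infDist x M) ≤ l (g (fM - f x)) := hlm.monotone (hmem x hxA)
      _ ≤ fM - f x := hlg _ (by linarith)
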